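/- arXiv:2503.12020 — 3 statements merged into one kernel-verified Lean document; each statement's English description precedes it below -/
import Mathlib

section
/- For every dimension d ≥ 2, every horizon K with K ≥ 1.5·d², every variance level σ ∈ (0,1], and every deterministic algorithm π for the K-round hypercube instance, the Bayes expected pseudo-regret, where the weight vector μ is drawn uniformly at random from {−Δ,Δ}^d with Δ = 1/√(96K), satisfies E_μ E[Regret(K)] ≥ d·√(K·σ²)/(8·√6). -/
open Finset

namespace HypercubeBandit

/-- An element of the hypercube `{−1,1}^d`, encoded by its sign pattern. -/
abbrev Act (d : ℕ) := Fin d → Bool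

/-- The real vector in `{−1,1}^d ⊆ ℝ^d` encoded by a sign pattern. -/
noncomputable def embed {d : ℕ} (a : Act d) : Fin d → ℝ := fun i => if a i then 1 else -1

/-- The weight vector in `{−Δ,Δ}^d ⊆ ℝ^d` encoded by a sign pattern. -/
noncomputable def wvec {d : ℕ} (Δ : ℝ) (μ : Act d) : Fin d → ℝ := fun i => if μ i then Δ else -Δ

/-- The standard inner product on `ℝ^d`. -/
noncomputable def ip {d : ℕ} (v w : Fin d → ℝ) : ℝ := ∑ i, v i * w i

/-- A deterministic algorithm: a map choosing, from the history of past
(action, reward) pairs, the next action of the hypercube (the round index is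
encoded by the length of the history). -/
def Alg (d : ℕ) := List ((Fin d → ℝ) × ℝ) → Act d

/-- The history of (action, reward) pairs after `k` rounds, given the Bernoulli
outcomes `ω`: in round `k` the reward is `σ · B` with `B = ω k ∈ {0,1}`. -/
noncomputable def hist {d : ℕ} (π : Alg d) (σ : ℝ) (ω : ℕ → Bool) :
    ℕ → List ((Fin d → ℝ) × ℝ)
  | 0 => []
  | k + 1 =>
      hist π σ ω k ++ [(embed (π (hist π σ ω k)), σ * (if ω k then 1 else 0))]

/-- The action selected by the algorithm in round `k`. -/
noncomputable def act {d : ℕ} (π : Alg d) (σ : ℝ) (ω : ℕ → Bool) (k : ℕ) : Act d :=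
  π (hist π σ ω k)

/-- The Bernoulli success probability of action `a`: `1/3 + ⟨μ, a⟩`. -/
noncomputable def bp {d : ℕ} (Δ : ℝ) (μ a : Act d) : ℝ :=
  1 / 3 + ip (wvec Δ μ) (embed a)

/-- Extension of a finite outcome sequence to `ℕ`. -/
def ext {K : ℕ} (ω : Fin K → Bool) : ℕ → Bool :=
  fun j => if h : j < K then ω ⟨j, h⟩ else false

/-- The probability of the trajectory determined by the Bernoulli outcomes `ω`
(rewards are drawn independently across rounds given the chosen actions). -/
noncomputable def trajP (d K : ℕ) (Δ σ : ℝ) (π : Alg d) (μ : Act d)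
    (ω : Fin K → Bool) : ℝ :=
  ∏ k : Fin K,
    (if ω k then bp Δ μ (act π σ (ext ω) k)
     else 1 - bp Δ μ (act π σ (ext ω) k))

/-- The maximal mean `max_{a ∈ {−1,1}^d} ⟨μ, a⟩`. -/
noncomputable def maxRew (d : ℕ) (Δ : ℝ) (μ : Act d) : ℝ :=
  Finset.univ.sup' Finset.univ_nonempty (fun a : Act d => ip (wvec Δ μ) (embed a))

/-- The pseudo-regret `∑_{k=1}^K σ·(max_{a∈𝒜} ⟨μ,a⟩ − ⟨μ, a_k⟩)`. -/
noncomputable def regret (d K : ℕ) (Δ σ : ℝ) (π : Alg d) (μ : Act d)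
    (ω : Fin K → Bool) : ℝ :=
  ∑ k : Fin K, σ * (maxRew d Δ μ - ip (wvec Δ μ) (embed (act π σ (ext ω) k)))

/-- The Bayes expected pseudo-regret: `μ` is uniform on `{−Δ,Δ}^d` with
`Δ = 1/√(96K)`, and the rewards follow scaled Bernoulli distributions
`σ·B(1/3 + ⟨μ,a⟩)`. -/
noncomputable def bayesRegret (d K : ℕ) (σ : ℝ) (π : Alg d) : ℝ :=
  (1 / 2 ^ d) * ∑ μ : Act d, ∑ ω : Fin K → Bool,
    trajP d K (1 / Real.sqrt (96 * K)) σ π μ ω *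
      regret d K (1 / Real.sqrt (96 * K)) σ π μ ω

/-- A family of conditional success probabilities that depends only on the
past outcomes. -/
def Pre (p : (ℕ → Bool) → ℕ → ℝ) : Prop :=
  ∀ ω ω' k, (∀ j, j < k → ω j = ω' j) → p ω k = p ω' k

/-- Trajectory probability of a bit string. -/
noncomputable def Pf (p : (ℕ → Bool) → ℕ → ℝ) (K : ℕ) (ω : Fin K → Bool) : ℝ :=
  ∏ k : Fin K, (if ω k then p (ext ω) k else 1 - p (ext ω) k)

lemma ext_snoc_lt {K : ℕ} (ω : Fin K → Bool) (b : Bool) {j : ℕ} (hj : j < K) :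
    ext (Fin.snoc ω b) j = ext ω j := by
  have hj' : j < K + 1 := Nat.lt_succ_of_lt hj
  unfold ext
  rw [dif_pos hj, dif_pos hj']
  have : (⟨j, hj'⟩ : Fin (K+1)) = Fin.castSucc ⟨j, hj⟩ := rfl
  rw [this, Fin.snoc_castSucc]

lemma ext_snoc_self {K : ℕ} (ω : Fin K → Bool) (b : Bool) :
    ext (Fin.snoc ω b) K = b := by
  unfold ext
  rw [dif_pos (Nat.lt_succ_self K)]
  have : (⟨K, Nat.lt_succ_self K⟩ : Fin (K+1)) = Fin.last K := rfl
  rw [this, Fin.snoc_last]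

lemma Pf_snoc {p : (ℕ → Bool) → ℕ → ℝ} (hp : Pre p) {K : ℕ}
    (ω : Fin K → Bool) (b : Bool) :
    Pf p (K+1) (Fin.snoc ω b)
      = Pf p K ω * (if b then p (ext ω) K else 1 - p (ext ω) K) := by
  unfold Pf
  rw [Fin.prod_univ_castSucc]
  congr 1
  · refine Finset.prod_congr rfl (fun k _ => ?_)
    have h1 : (Fin.snoc ω b : Fin (K+1) → Bool) k.castSucc = ω k :=
      Fin.snoc_castSucc ..
    have h2 : p (ext (Fin.snoc ω b)) (k.castSucc : ℕ) = p (ext ω) (k : ℕ) := by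
      have : ((k.castSucc : Fin (K+1)) : ℕ) = (k : ℕ) := rfl
      rw [this]
      exact hp _ _ _ (fun j hj => ext_snoc_lt ω b (hj.trans k.isLt))
    rw [h1, h2]
  · have h1 : (Fin.snoc ω b : Fin (K+1) → Bool) (Fin.last K) = b := Fin.snoc_last ..
    have h2 : p (ext (Fin.snoc ω b)) ((Fin.last K : Fin (K+1)) : ℕ) = p (ext ω) K := by
      have : ((Fin.last K : Fin (K+1)) : ℕ) = K := rfl
      rw [this]
      exact hp _ _ _ (fun j hj => ext_snoc_lt ω b hj)
    rw [h1, h2]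

lemma sum_snoc {K : ℕ} (F : (Fin (K+1) → Bool) → ℝ) :
    ∑ ω : Fin (K+1) → Bool, F ω
      = ∑ ω : Fin K → Bool, (F (Fin.snoc ω true) + F (Fin.snoc ω false)) := by
  rw [← Equiv.sum_comp (Fin.snocEquiv (fun _ => Bool)) F]
  rw [Fintype.sum_prod_type]
  rw [Fintype.sum_bool]
  rw [Finset.sum_add_distrib]
  congr 1 <;> exact Finset.sum_congr rfl (fun ω _ => by simp [Fin.snocEquiv_apply])

lemma Pf_sum_one {p : (ℕ → Bool) → ℕ → ℝ} (hp : Pre p) :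
    ∀ K : ℕ, ∑ ω : Fin K → Bool, Pf p K ω = 1
  | 0 => by
    have h1 : ∀ ω : Fin 0 → Bool, Pf p 0 ω = 1 := fun ω => by simp [Pf]
    simp [h1]
  | K + 1 => by
    rw [sum_snoc]
    have : ∀ ω : Fin K → Bool,
        Pf p (K+1) (Fin.snoc ω true) + Pf p (K+1) (Fin.snoc ω false)
          = Pf p K ω := by
      intro ω
      rw [Pf_snoc hp, Pf_snoc hp]
      simp; ring
    rw [Finset.sum_congr rfl (fun ω _ => this ω)]
    exact Pf_sum_one hp K

lemma Pf_pos {p : (ℕ → Bool) → ℕ → ℝ}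
    (h0 : ∀ ω k, 0 < p ω k) (h1 : ∀ ω k, p ω k < 1) {K : ℕ} (ω : Fin K → Bool) :
    0 < Pf p K ω := by
  refine Finset.prod_pos (fun k _ => ?_)
  split
  · exact h0 _ _
  · linarith [h1 (ext ω) (k : ℕ)]

lemma Pf_nonneg {p : (ℕ → Bool) → ℕ → ℝ}
    (h0 : ∀ ω k, 0 ≤ p ω k) (h1 : ∀ ω k, p ω k ≤ 1) {K : ℕ} (ω : Fin K → Bool) :
    0 ≤ Pf p K ω := by
  refine Finset.prod_nonneg (fun k _ => ?_)
  split
  · exact h0 _ _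
  · linarith [h1 (ext ω) (k : ℕ)]

/-- χ²-type bound for trajectory probabilities. -/
lemma Pf_chiSq {p q : (ℕ → Bool) → ℕ → ℝ} (hp : Pre p) (hq : Pre q)
    (hq0 : ∀ ω k, 0 < q ω k) (hq1 : ∀ ω k, q ω k < 1)
    {c : ℝ} (hc : 0 ≤ c)
    (hnode : ∀ ω k, (p ω k - q ω k)^2 / (q ω k * (1 - q ω k)) ≤ c) :
    ∀ K : ℕ, ∑ ω : Fin K → Bool, (Pf p K ω)^2 / Pf q K ω ≤ (1 + c)^K
  | 0 => by
    have h1 : ∀ ω : Fin 0 → Bool, (Pf p 0 ω)^2 / Pf q 0 ω = 1 := fun ω => by simp [Pf]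
    simp [h1]
  | K + 1 => by
    rw [sum_snoc]
    have key : ∀ ω : Fin K → Bool,
        (Pf p (K+1) (Fin.snoc ω true))^2 / Pf q (K+1) (Fin.snoc ω true)
          + (Pf p (K+1) (Fin.snoc ω false))^2 / Pf q (K+1) (Fin.snoc ω false)
        ≤ ((Pf p K ω)^2 / Pf q K ω) * (1 + c) := by
      intro ω
      rw [Pf_snoc hp, Pf_snoc hq, Pf_snoc hp, Pf_snoc hq]
      norm_num
      set A := Pf p K ω
      set B := Pf q K ω
      set x := p (ext ω) K
      set y := q (ext ω) K
      have hB : 0 < B := Pf_pos hq0 hq1 ω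
      have hy0 : 0 < y := hq0 _ _
      have hy1 : y < 1 := hq1 _ _
      have hBne : B ≠ 0 := ne_of_gt hB
      have hyne : y ≠ 0 := ne_of_gt hy0
      have h1yne : 1 - y ≠ 0 := by intro h; nlinarith
      have hid : (A * x)^2 / (B * y) + (A * (1-x))^2 / (B * (1-y))
          = (A^2 / B) * (1 + (x - y)^2 / (y * (1 - y))) := by
        field_simp
        ring
      rw [hid]
      have hAB : 0 ≤ A^2 / B := div_nonneg (sq_nonneg A) hB.le
      have := hnode (ext ω) K
      nlinarith
    calc ∑ ω : Fin K → Bool,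
          ((Pf p (K+1) (Fin.snoc ω true))^2 / Pf q (K+1) (Fin.snoc ω true)
            + (Pf p (K+1) (Fin.snoc ω false))^2 / Pf q (K+1) (Fin.snoc ω false))
        ≤ ∑ ω : Fin K → Bool, ((Pf p K ω)^2 / Pf q K ω) * (1 + c) :=
          Finset.sum_le_sum (fun ω _ => key ω)
      _ = (∑ ω : Fin K → Bool, (Pf p K ω)^2 / Pf q K ω) * (1 + c) := by
          rw [Finset.sum_mul]
      _ ≤ (1 + c)^K * (1 + c) := by
          have h := Pf_chiSq hp hq hq0 hq1 hc hnode K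
          have h1c : (0:ℝ) ≤ 1 + c := by linarith
          exact mul_le_mul_of_nonneg_right h h1c
      _ = (1 + c)^(K+1) := by ring


/-- Cauchy–Schwarz: L1 distance bounded by the square root of χ². -/
lemma l1_le_sqrt_chiSq {α : Type*} [Fintype α] (P Q : α → ℝ)
    (hQ : ∀ x, 0 < Q x) (hQ1 : ∑ x, Q x = 1) (hP1 : ∑ x, P x = 1)
    {χ : ℝ} (hχ : ∑ x, (P x)^2 / Q x ≤ 1 + χ) :
    ∑ x, |P x - Q x| ≤ Real.sqrt χ := by
  have hkey : ∑ x, (P x - Q x)^2 / Q x ≤ χ := by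
    have hexp : ∀ x : α, (P x - Q x)^2 / Q x = (P x)^2 / Q x - 2 * P x + Q x := by
      intro x
      have := (hQ x).ne'
      field_simp
      ring
    rw [Finset.sum_congr rfl (fun x _ => hexp x)]
    rw [Finset.sum_add_distrib, Finset.sum_sub_distrib, ← Finset.mul_sum, hP1, hQ1]
    linarith
  have hCS := Finset.sum_mul_sq_le_sq_mul_sq Finset.univ
      (fun x => Real.sqrt (Q x)) (fun x => |P x - Q x| / Real.sqrt (Q x))
  have he1 : ∀ x : α, Real.sqrt (Q x) * (|P x - Q x| / Real.sqrt (Q x)) = |P x - Q x| := by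
    intro x
    rw [mul_div_cancel₀]
    exact (Real.sqrt_ne_zero').mpr (hQ x)
  have he2 : ∀ x : α, (Real.sqrt (Q x))^2 = Q x := fun x => Real.sq_sqrt (hQ x).le
  have he3 : ∀ x : α, (|P x - Q x| / Real.sqrt (Q x))^2 = (P x - Q x)^2 / Q x := by
    intro x
    rw [div_pow, sq_abs, he2]
  rw [Finset.sum_congr rfl (fun x _ => he1 x),
      Finset.sum_congr rfl (fun x _ => he2 x),
      Finset.sum_congr rfl (fun x _ => he3 x), hQ1, one_mul] at hCS
  have habs : 0 ≤ ∑ x, |P x - Q x| := Finset.sum_nonneg (fun x _ => abs_nonneg _)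
  have hχ0 : 0 ≤ χ := le_trans (Finset.sum_nonneg (fun x _ =>
    div_nonneg (sq_nonneg _) (hQ x).le)) hkey
  rw [show χ = (Real.sqrt χ)^2 from (Real.sq_sqrt hχ0).symm] at hkey
  nlinarith [Real.sqrt_nonneg χ]

lemma exp_two_ninths_le : Real.exp (2/9) ≤ 5/4 := by
  have habs : |(2:ℝ)/9| ≤ 1 := by rw [abs_of_nonneg (by norm_num : (0:ℝ) ≤ 2/9)]; norm_num
  have h := Real.exp_bound habs (n := 4) (by norm_num)
  have hs : ∑ m ∈ Finset.range 4, ((2:ℝ)/9) ^ m / (Nat.factorial m)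
      = 1 + 2/9 + 2/81 + 4/2187 := by
    norm_num [Finset.sum_range_succ, Nat.factorial]
  rw [hs, abs_of_nonneg (by norm_num : (0:ℝ) ≤ 2/9)] at h
  have h2 := (abs_le.mp h).2
  norm_num [Nat.factorial] at h2
  linarith

lemma one_add_pow_le {K : ℕ} (hK : 0 < K) : (1 + 2/(9*(K:ℝ)))^K ≤ 5/4 := by
  have hKR : (0:ℝ) < K := by exact_mod_cast hK
  have h1 : (1 + 2/(9*(K:ℝ))) ≤ Real.exp (2/(9*K)) := by
    have := Real.add_one_le_exp (2/(9*(K:ℝ)))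
    linarith
  have h0 : (0:ℝ) ≤ 1 + 2/(9*(K:ℝ)) := by positivity
  calc (1 + 2/(9*(K:ℝ)))^K ≤ (Real.exp (2/(9*K)))^K := pow_le_pow_left₀ h0 h1 K
    _ = Real.exp ((K:ℝ) * (2/(9*K))) := (Real.exp_nat_mul _ K).symm
    _ = Real.exp (2/9) := by
        congr 1
        field_simp
    _ ≤ 5/4 := exp_two_ninths_le


section InstanceLemmas

variable {d : ℕ}

lemma hist_congr (π : Alg d) (σ : ℝ) (ω ω' : ℕ → Bool) :
    ∀ k : ℕ, (∀ j, j < k → ω j = ω' j) → hist π σ ω k = hist π σ ω' k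
  | 0, _ => rfl
  | k+1, h => by
    have ih := hist_congr π σ ω ω' k (fun j hj => h j (Nat.lt_succ_of_lt hj))
    simp only [hist, ih, h k (Nat.lt_succ_self k)]

lemma act_congr (π : Alg d) (σ : ℝ) (ω ω' : ℕ → Bool) (k : ℕ)
    (h : ∀ j, j < k → ω j = ω' j) : act π σ ω k = act π σ ω' k := by
  unfold act; rw [hist_congr π σ ω ω' k h]

lemma pre_bp (π : Alg d) (σ Δ : ℝ) (μ : Act d) :
    Pre (fun ω k => bp Δ μ (act π σ ω k)) :=
  fun ω ω' k h => by simp only [act_congr π σ ω ω' k h]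

lemma ip_abs_le {Δ : ℝ} (hΔ0 : 0 ≤ Δ) (μ a : Act d) :
    |ip (wvec Δ μ) (embed a)| ≤ (d : ℝ) * Δ := by
  unfold ip
  calc |∑ i, wvec Δ μ i * embed a i| ≤ ∑ i, |wvec Δ μ i * embed a i| :=
        Finset.abs_sum_le_sum_abs _ _
    _ ≤ ∑ _i : Fin d, Δ := by
        refine Finset.sum_le_sum (fun i _ => ?_)
        have h1 : |wvec Δ μ i| = Δ := by
          unfold wvec; cases μ i <;> simp [abs_of_nonneg hΔ0]
        have h2 : |embed a i| = 1 := by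
          unfold embed; cases a i <;> simp
        rw [abs_mul, h1, h2, mul_one]
    _ = (d : ℝ) * Δ := by
        rw [Finset.sum_const, Finset.card_univ, Fintype.card_fin, nsmul_eq_mul]

lemma bp_mem {Δ : ℝ} (hΔ0 : 0 ≤ Δ) (hdΔ : (d : ℝ) * Δ ≤ 1/12) (μ a : Act d) :
    1/4 ≤ bp Δ μ a ∧ bp Δ μ a ≤ 5/12 := by
  have h := abs_le.mp (ip_abs_le hΔ0 μ a)
  unfold bp
  constructor <;> [linarith [h.1]; linarith [h.2]]

lemma flip_invol (i : Fin d) :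
    Function.Involutive (fun μ : Act d => Function.update μ i (!(μ i))) := by
  intro μ; funext j
  by_cases hj : j = i
  · subst hj; simp [Function.update_self]
  · simp [Function.update_of_ne hj]

lemma bp_flip_sq (Δ : ℝ) (μ : Act d) (i : Fin d) (a : Act d) :
    (bp Δ μ a - bp Δ (Function.update μ i (!(μ i))) a)^2 = 4 * Δ^2 := by
  set μ' := Function.update μ i (!(μ i)) with hμ'
  have hne : ∀ j : Fin d, j ≠ i →
      wvec Δ μ j * embed a j - wvec Δ μ' j * embed a j = 0 := by
    intro j hj
    have hupd : μ' j = μ j := Function.update_of_ne hj _ _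
    unfold wvec; rw [hupd]; ring
  have hdiff : bp Δ μ a - bp Δ μ' a = (wvec Δ μ i - wvec Δ μ' i) * embed a i := by
    unfold bp ip
    have h1 : (1/3 + ∑ j, wvec Δ μ j * embed a j)
        - (1/3 + ∑ j, wvec Δ μ' j * embed a j)
        = ∑ j, (wvec Δ μ j * embed a j - wvec Δ μ' j * embed a j) := by
      rw [Finset.sum_sub_distrib]; ring
    rw [h1, Finset.sum_eq_single i (fun j _ hj => hne j hj) (by simp)]
    ring
  rw [hdiff]
  have hμ'i : μ' i = !(μ i) := Function.update_self ..
  unfold wvec embed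
  rw [hμ'i]
  cases μ i <;> cases a i <;> norm_num <;> ring

lemma maxRew_ge (Δ : ℝ) (μ : Act d) : (d : ℝ) * Δ ≤ maxRew d Δ μ := by
  have hval : ip (wvec Δ μ) (embed μ) = (d : ℝ) * Δ := by
    unfold ip
    have : ∀ i : Fin d, wvec Δ μ i * embed μ i = Δ := by
      intro i; unfold wvec embed; cases μ i <;> simp
    rw [Finset.sum_congr rfl (fun i _ => this i), Finset.sum_const,
      Finset.card_univ, Fintype.card_fin, nsmul_eq_mul]
  rw [← hval]
  unfold maxRew
  exact Finset.le_sup' (fun a : Act d => ip (wvec Δ μ) (embed a)) (Finset.mem_univ μ)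

lemma gap_ge (Δ : ℝ) (μ a : Act d) :
    ∑ i : Fin d, (if a i = μ i then (0:ℝ) else 2 * Δ)
      ≤ maxRew d Δ μ - ip (wvec Δ μ) (embed a) := by
  have h1 : (d : ℝ) * Δ - ip (wvec Δ μ) (embed a)
      = ∑ i : Fin d, (Δ - wvec Δ μ i * embed a i) := by
    unfold ip
    rw [Finset.sum_sub_distrib, Finset.sum_const, Finset.card_univ,
      Fintype.card_fin, nsmul_eq_mul]
  have h2 : ∀ i : Fin d, Δ - wvec Δ μ i * embed a i
      = (if a i = μ i then (0:ℝ) else 2 * Δ) := by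
    intro i; unfold wvec embed
    cases hμ : μ i <;> cases ha : a i <;> norm_num <;> ring
  have h3 := maxRew_ge (d := d) Δ μ
  calc ∑ i : Fin d, (if a i = μ i then (0:ℝ) else 2 * Δ)
      = ∑ i : Fin d, (Δ - wvec Δ μ i * embed a i) :=
        (Finset.sum_congr rfl (fun i _ => (h2 i).symm))
    _ = (d : ℝ) * Δ - ip (wvec Δ μ) (embed a) := h1.symm
    _ ≤ maxRew d Δ μ - ip (wvec Δ μ) (embed a) := by linarith

end InstanceLemmas

/-- for every `d ≥ 2`, `K ≥ 1.5·d²`, `σ ∈ (0,1]` and every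
deterministic algorithm `π` for the `K`-round hypercube instance, the Bayes
expected pseudo-regret with `μ` uniform on `{−Δ,Δ}^d`, `Δ = 1/√(96K)`, is at
least `d·√(K·σ²)/(8·√6)`. -/
theorem fixed_variance_bayes_regret_lower_bound
    (d K : ℕ) (σ : ℝ) (π : Alg d)
    (hd : 2 ≤ d) (hK : (3 : ℝ) / 2 * (d : ℝ) ^ 2 ≤ (K : ℝ))
    (hσ0 : 0 < σ) (hσ1 : σ ≤ 1) :
    (d : ℝ) * Real.sqrt ((K : ℝ) * σ ^ 2) / (8 * Real.sqrt 6) ≤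
      bayesRegret d K σ π := by
  classical
  have hd2 : (2:ℝ) ≤ (d:ℝ) := by exact_mod_cast hd
  have hK6 : (6:ℝ) ≤ (K:ℝ) := by nlinarith
  have hKR : (0:ℝ) < (K:ℝ) := by linarith
  have hKpos : 0 < K := by exact_mod_cast hKR
  set Δ : ℝ := 1 / Real.sqrt (96 * (K:ℝ)) with hΔdef
  have h96 : (0:ℝ) < 96 * (K:ℝ) := by linarith
  have hs96 : 0 < Real.sqrt (96 * (K:ℝ)) := Real.sqrt_pos.mpr h96
  have hΔ0 : 0 < Δ := by rw [hΔdef]; positivity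
  have hΔsq : Δ^2 = 1/(96*(K:ℝ)) := by
    rw [hΔdef, div_pow, one_pow, Real.sq_sqrt h96.le]
  have hdΔ : (d:ℝ) * Δ ≤ 1/12 := by
    have h144 : (12*(d:ℝ))^2 ≤ 96*(K:ℝ) := by nlinarith
    have h12d : 12*(d:ℝ) ≤ Real.sqrt (96*(K:ℝ)) :=
      (Real.le_sqrt (by positivity) h96.le).mpr h144
    rw [hΔdef, mul_one_div, div_le_div_iff₀ hs96 (by norm_num : (0:ℝ) < 12)]
    linarith
  -- conditional probability families
  set p : Act d → (ℕ → Bool) → ℕ → ℝ := fun μ ω k => bp Δ μ (act π σ ω k) with hp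
  have hpre : ∀ μ : Act d, Pre (p μ) := fun μ => pre_bp π σ Δ μ
  have hmem : ∀ (μ : Act d) ω k, 1/4 ≤ p μ ω k ∧ p μ ω k ≤ 5/12 :=
    fun μ ω k => bp_mem hΔ0.le hdΔ μ _
  have hp0 : ∀ (μ : Act d) ω k, 0 < p μ ω k :=
    fun μ ω k => lt_of_lt_of_le (by norm_num) (hmem μ ω k).1
  have hp1 : ∀ (μ : Act d) ω k, p μ ω k < 1 :=
    fun μ ω k => lt_of_le_of_lt (hmem μ ω k).2 (by norm_num)
  set P : Act d → (Fin K → Bool) → ℝ := fun μ ω => Pf (p μ) K ω with hPdef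
  have htraj : ∀ (μ : Act d) (ω : Fin K → Bool), trajP d K Δ σ π μ ω = P μ ω :=
    fun μ ω => rfl
  have hsum1 : ∀ μ : Act d, ∑ ω : Fin K → Bool, P μ ω = 1 :=
    fun μ => Pf_sum_one (hpre μ) K
  have hPnn : ∀ (μ : Act d) (ω : Fin K → Bool), 0 ≤ P μ ω :=
    fun μ ω => (Pf_pos (hp0 μ) (hp1 μ) ω).le
  -- total variation bound between flipped instances
  have hTV : ∀ (μ : Act d) (i : Fin d),
      ∑ ω : Fin K → Bool, |P μ ω - P (Function.update μ i (!(μ i))) ω| ≤ 1/2 := by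
    intro μ i
    set μ' := Function.update μ i (!(μ i)) with hμ'def
    have hnode : ∀ ω k,
        (p μ ω k - p μ' ω k)^2 / (p μ' ω k * (1 - p μ' ω k)) ≤ 2/(9*(K:ℝ)) := by
      intro ω k
      have hnum : (p μ ω k - p μ' ω k)^2 = 4 * Δ^2 := by
        simp only [hp]
        have hact : act π σ ω k = act π σ ω k := rfl
        exact bp_flip_sq Δ μ i _
      have hq := hmem μ' ω k
      have hden : 3/16 ≤ p μ' ω k * (1 - p μ' ω k) := by nlinarith [hq.1, hq.2]
      rw [hnum, hΔsq]
      have h4 : 4 * (1/(96*(K:ℝ))) = 1/(24*(K:ℝ)) := by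
        field_simp
        ring
      rw [h4]
      calc (1:ℝ)/(24*(K:ℝ)) / (p μ' ω k * (1 - p μ' ω k))
          ≤ (1/(24*(K:ℝ)))/(3/16) :=
            div_le_div₀ (by positivity) le_rfl (by norm_num) hden
        _ = 2/(9*(K:ℝ)) := by
            rw [div_div_eq_mul_div]
            field_simp
            ring
    have hchi := Pf_chiSq (hpre μ) (hpre μ') (hp0 μ') (hp1 μ')
      (c := 2/(9*(K:ℝ))) (by positivity) hnode K
    have hpow := one_add_pow_le hKpos
    have hl1 := l1_le_sqrt_chiSq (P μ) (P μ')
      (fun ω => Pf_pos (hp0 μ') (hp1 μ') ω) (hsum1 μ') (hsum1 μ)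
      (χ := 1/4) (by
        simp only [hPdef]
        linarith)
    have hsqrt14 : Real.sqrt (1/4) = 1/2 := by
      rw [show (1/4:ℝ) = (1/2)^2 by norm_num,
        Real.sqrt_sq (by norm_num : (0:ℝ) ≤ 1/2)]
    rw [hsqrt14] at hl1
    exact hl1
  -- mismatch indicators
  set ind : Fin K → Fin d → Act d → (Fin K → Bool) → ℝ :=
    fun k i μ ω => if act π σ (ext ω) (k:ℕ) i = μ i then 0 else 1 with hind
  -- pairing bound
  have hpair : ∀ (k : Fin K) (i : Fin d) (μ : Act d),
      1/2 ≤ (∑ ω : Fin K → Bool, P μ ω * ind k i μ ω)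
          + ∑ ω : Fin K → Bool,
              P (Function.update μ i (!(μ i))) ω
                * ind k i (Function.update μ i (!(μ i))) ω := by
    intro k i μ
    set μ' := Function.update μ i (!(μ i)) with hμ'def
    have hcompl : ∀ ω : Fin K → Bool, ind k i μ' ω = 1 - ind k i μ ω := by
      intro ω
      simp only [hind, hμ'def, Function.update_self]
      cases h : act π σ (ext ω) (k:ℕ) i <;> cases hμ : μ i <;> simp
    have hsplit : (∑ ω : Fin K → Bool, P μ ω * ind k i μ ω)
          + ∑ ω : Fin K → Bool, P μ' ω * ind k i μ' ω
        = (∑ ω : Fin K → Bool, P μ' ω)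
          + ∑ ω : Fin K → Bool, (P μ ω - P μ' ω) * ind k i μ ω := by
      rw [← Finset.sum_add_distrib, ← Finset.sum_add_distrib]
      refine Finset.sum_congr rfl (fun ω _ => ?_)
      rw [hcompl ω]; ring
    have h1 : ∀ ω : Fin K → Bool,
        -|P μ ω - P μ' ω| ≤ (P μ ω - P μ' ω) * ind k i μ ω := by
      intro ω
      simp only [hind]
      split
      · simpa using abs_nonneg (P μ ω - P μ' ω)
      · simpa using neg_abs_le (P μ ω - P μ' ω)
    have h2 : -∑ ω : Fin K → Bool, |P μ ω - P μ' ω|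
        ≤ ∑ ω : Fin K → Bool, (P μ ω - P μ' ω) * ind k i μ ω := by
      rw [← Finset.sum_neg_distrib]
      exact Finset.sum_le_sum (fun ω _ => h1 ω)
    have h3 := hTV μ i
    rw [hsplit, hsum1 μ']
    rw [← hμ'def] at h3
    linarith
  -- per (round, coordinate) bound after averaging over μ
  have hSki : ∀ (k : Fin K) (i : Fin d),
      (2:ℝ)^d / 4 ≤ ∑ μ : Act d, ∑ ω : Fin K → Bool, P μ ω * ind k i μ ω := by
    intro k i
    have hflip : ∑ μ : Act d,
        (∑ ω : Fin K → Bool,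
          P (Function.update μ i (!(μ i))) ω * ind k i (Function.update μ i (!(μ i))) ω)
        = ∑ μ : Act d, ∑ ω : Fin K → Bool, P μ ω * ind k i μ ω := by
      have h := Equiv.sum_comp ((flip_invol (d := d) i).toPerm)
        (fun μ : Act d => ∑ ω : Fin K → Bool, P μ ω * ind k i μ ω)
      simpa [Function.Involutive.coe_toPerm] using h
    have hcard : ∑ _μ : Act d, (1/2 : ℝ) = (2:ℝ)^d / 2 := by
      rw [Finset.sum_const, Finset.card_univ]
      simp [Fintype.card_fun]
      ring
    have hle : ∑ _μ : Act d, (1/2 : ℝ)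
        ≤ ∑ μ : Act d, ((∑ ω : Fin K → Bool, P μ ω * ind k i μ ω)
            + ∑ ω : Fin K → Bool,
                P (Function.update μ i (!(μ i))) ω
                  * ind k i (Function.update μ i (!(μ i))) ω) :=
      Finset.sum_le_sum (fun μ _ => hpair k i μ)
    rw [Finset.sum_add_distrib, hflip, hcard] at hle
    linarith
  -- regret lower bound pointwise
  have hreg : ∀ (μ : Act d) (ω : Fin K → Bool),
      2*σ*Δ * ∑ k : Fin K, ∑ i : Fin d, ind k i μ ω ≤ regret d K Δ σ π μ ω := by
    intro μ ω
    unfold regret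
    rw [Finset.mul_sum]
    refine Finset.sum_le_sum (fun k _ => ?_)
    have heq : 2*σ*Δ * ∑ i : Fin d, ind k i μ ω
        = σ * ∑ i : Fin d,
            (if act π σ (ext ω) (k:ℕ) i = μ i then (0:ℝ) else 2*Δ) := by
      rw [Finset.mul_sum, Finset.mul_sum]
      refine Finset.sum_congr rfl (fun i _ => ?_)
      simp only [hind]
      split <;> ring
    rw [heq]
    exact mul_le_mul_of_nonneg_left (gap_ge Δ μ (act π σ (ext ω) (k:ℕ))) hσ0.le
  -- main estimate
  have hmain : σ*Δ*(K:ℝ)*(d:ℝ)/2 ≤ bayesRegret d K σ π := by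
    unfold bayesRegret
    rw [← hΔdef]
    have hswap : ∑ μ : Act d, ∑ ω : Fin K → Bool,
          P μ ω * (∑ k : Fin K, ∑ i : Fin d, ind k i μ ω)
        = ∑ k : Fin K, ∑ i : Fin d, ∑ μ : Act d, ∑ ω : Fin K → Bool,
            P μ ω * ind k i μ ω := by
      calc ∑ μ : Act d, ∑ ω : Fin K → Bool,
            P μ ω * (∑ k : Fin K, ∑ i : Fin d, ind k i μ ω)
          = ∑ μ : Act d, ∑ ω : Fin K → Bool, ∑ k : Fin K, ∑ i : Fin d,
              P μ ω * ind k i μ ω := by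
            refine Finset.sum_congr rfl (fun μ _ => Finset.sum_congr rfl (fun ω _ => ?_))
            rw [Finset.mul_sum]
            exact Finset.sum_congr rfl (fun k _ => Finset.mul_sum ..)
        _ = ∑ μ : Act d, ∑ k : Fin K, ∑ ω : Fin K → Bool, ∑ i : Fin d,
              P μ ω * ind k i μ ω := by
            exact Finset.sum_congr rfl (fun μ _ => Finset.sum_comm)
        _ = ∑ k : Fin K, ∑ μ : Act d, ∑ ω : Fin K → Bool, ∑ i : Fin d,
              P μ ω * ind k i μ ω := Finset.sum_comm
        _ = ∑ k : Fin K, ∑ μ : Act d, ∑ i : Fin d, ∑ ω : Fin K → Bool,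
              P μ ω * ind k i μ ω := by
            exact Finset.sum_congr rfl (fun k _ => Finset.sum_congr rfl
              (fun μ _ => Finset.sum_comm))
        _ = ∑ k : Fin K, ∑ i : Fin d, ∑ μ : Act d, ∑ ω : Fin K → Bool,
              P μ ω * ind k i μ ω := by
            exact Finset.sum_congr rfl (fun k _ => Finset.sum_comm)
    have hlow : (K:ℝ)*(d:ℝ)*((2:ℝ)^d/4)
        ≤ ∑ k : Fin K, ∑ i : Fin d, ∑ μ : Act d, ∑ ω : Fin K → Bool,
            P μ ω * ind k i μ ω := by
      calc (K:ℝ)*(d:ℝ)*((2:ℝ)^d/4)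
          = ∑ _k : Fin K, ∑ _i : Fin d, ((2:ℝ)^d/4) := by
            simp [Finset.sum_const, Finset.card_univ]
            ring
        _ ≤ _ := Finset.sum_le_sum (fun k _ => Finset.sum_le_sum (fun i _ => hSki k i))
    have h2d : (0:ℝ) < 2^d := by positivity
    calc σ*Δ*(K:ℝ)*(d:ℝ)/2
        = (1/2^d) * (2*σ*Δ * ((K:ℝ)*(d:ℝ)*((2:ℝ)^d/4))) := by
          field_simp
          ring
      _ ≤ (1/2^d) * (2*σ*Δ * ∑ k : Fin K, ∑ i : Fin d, ∑ μ : Act d,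
            ∑ ω : Fin K → Bool, P μ ω * ind k i μ ω) := by
          refine mul_le_mul_of_nonneg_left ?_ (by positivity)
          exact mul_le_mul_of_nonneg_left hlow (by positivity)
      _ = (1/2^d) * ∑ μ : Act d, ∑ ω : Fin K → Bool,
            P μ ω * (2*σ*Δ * (∑ k : Fin K, ∑ i : Fin d, ind k i μ ω)) := by
          congr 1
          rw [show ∑ μ : Act d, ∑ ω : Fin K → Bool,
              P μ ω * (2*σ*Δ * (∑ k : Fin K, ∑ i : Fin d, ind k i μ ω))
            = 2*σ*Δ * ∑ μ : Act d, ∑ ω : Fin K → Bool,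
                P μ ω * (∑ k : Fin K, ∑ i : Fin d, ind k i μ ω) from by
              rw [Finset.mul_sum]
              refine Finset.sum_congr rfl (fun μ _ => ?_)
              rw [Finset.mul_sum]
              exact Finset.sum_congr rfl (fun ω _ => by ring)]
          rw [hswap]
      _ ≤ (1/2^d) * ∑ μ : Act d, ∑ ω : Fin K → Bool,
            trajP d K Δ σ π μ ω * regret d K Δ σ π μ ω := by
          refine mul_le_mul_of_nonneg_left ?_ (by positivity)
          refine Finset.sum_le_sum (fun μ _ => Finset.sum_le_sum (fun ω _ => ?_))
          rw [htraj μ ω]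
          exact mul_le_mul_of_nonneg_left (hreg μ ω) (hPnn μ ω)
  -- final arithmetic
  have hsqσ : Real.sqrt ((K:ℝ)*σ^2) = Real.sqrt (K:ℝ) * σ := by
    rw [Real.sqrt_mul (Nat.cast_nonneg K), Real.sqrt_sq hσ0.le]
  have hsK : (0:ℝ) < Real.sqrt (K:ℝ) := Real.sqrt_pos.mpr hKR
  have hsKsq : (Real.sqrt (K:ℝ))^2 = (K:ℝ) := Real.sq_sqrt (Nat.cast_nonneg K)
  have hs6 : (0:ℝ) < Real.sqrt 6 := Real.sqrt_pos.mpr (by norm_num)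
  have h96eq : Real.sqrt (96*(K:ℝ)) = 4 * Real.sqrt 6 * Real.sqrt (K:ℝ) := by
    rw [show (96:ℝ)*(K:ℝ) = 4^2*(6*(K:ℝ)) by ring]
    rw [Real.sqrt_mul (by positivity : (0:ℝ) ≤ 4^2) (6*(K:ℝ)),
      Real.sqrt_sq (by norm_num : (0:ℝ) ≤ 4),
      Real.sqrt_mul (by norm_num : (0:ℝ) ≤ 6)]
    ring
  have hfin : (d:ℝ) * Real.sqrt ((K:ℝ)*σ^2) / (8*Real.sqrt 6)
      = σ*Δ*(K:ℝ)*(d:ℝ)/2 := by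
    rw [hsqσ, hΔdef, h96eq, ← hsKsq]
    field_simp
    rw [Real.sqrt_sq hsK.le]
    ring
  rw [hfin]
  exact hmain

end HypercubeBandit
end

section
/- Let d ≥ 1, K ≥ 2d, μ ∈ ℝ^d, and let D_1,…,D_K ⊆ ℝ^d be nonempty finite decision sets (each D_k possibly chosen as a function of the learner's past actions and observed rewards) such that max_{x∈D_k}⟨μ,x⟩ − min_{x∈D_k}⟨μ,x⟩ ≤ 1 for every k. Then there exist a strong adversary choosing σ_k ∈ {0,1} as a function of D_k and the past interaction, and a learner choosing x_k ∈ D_k as a function of D_1,…,D_k, σ_1,…,σ_k and the observed rewards r_1,…,r_{k−1} (where r_j = ⟨μ,x_j⟩ exactly whenever σ_j = 0), such that on every realization: (i) ∑_{k=1}^K (max_{x∈D_k}⟨μ,x⟩ − ⟨μ,x_k⟩) ≤ d, and (ii) ∑_{k=1}^K σ_k² ≥ K/2. Concretely, σ_k = 0 exactly on the rounds in which D_k contains a vector outside the linear span of the previously selected actions, and there are at most d such rounds. -/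
open Finset

noncomputable def histSpan (d : ℕ) (h : List ((Fin d → ℝ) × ℝ)) :
    Submodule ℝ (Fin d → ℝ) :=
  Submodule.span ℝ {v | ∃ p ∈ h, p.1 = v}

open scoped Classical in
noncomputable def advFn (d : ℕ) (Dk : Finset (Fin d → ℝ))
    (h : List ((Fin d → ℝ) × ℝ)) : ℝ :=
  if (↑Dk : Set (Fin d → ℝ)) ⊆ ↑(histSpan d h) then 1 else 0

open scoped Classical in
noncomputable def pickArg (d : ℕ) (μ : Fin d → ℝ) (Dk : Finset (Fin d → ℝ))
    (h : List ((Fin d → ℝ) × ℝ)) : Fin d → ℝ :=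
  if hne : Dk.Nonempty then
    if hx : ∃ x ∈ Dk, x ∉ histSpan d h then hx.choose
    else (Finset.exists_mem_eq_sup' hne (fun x => ∑ i, μ i * x i)).choose
  else fun _ => 0

lemma pickArg_mem (d : ℕ) (μ : Fin d → ℝ) (Dk : Finset (Fin d → ℝ))
    (h : List ((Fin d → ℝ) × ℝ)) (hne : Dk.Nonempty) :
    pickArg d μ Dk h ∈ Dk := by
  unfold pickArg
  rw [dif_pos hne]
  split_ifs with hx
  · exact hx.choose_spec.1
  · exact (Finset.exists_mem_eq_sup' hne (fun x => ∑ i, μ i * x i)).choose_spec.1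

lemma pickArg_notMem (d : ℕ) (μ : Fin d → ℝ) (Dk : Finset (Fin d → ℝ))
    (h : List ((Fin d → ℝ) × ℝ)) (hx : ∃ x ∈ Dk, x ∉ histSpan d h) :
    pickArg d μ Dk h ∉ histSpan d h := by
  have hne : Dk.Nonempty := ⟨hx.choose, hx.choose_spec.1⟩
  unfold pickArg
  rw [dif_pos hne, dif_pos hx]
  exact hx.choose_spec.2

lemma pickArg_sup (d : ℕ) (μ : Fin d → ℝ) (Dk : Finset (Fin d → ℝ))
    (h : List ((Fin d → ℝ) × ℝ)) (hne : Dk.Nonempty)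
    (hsub : ∀ x ∈ Dk, x ∈ histSpan d h) :
    Dk.sup' hne (fun x => ∑ i, μ i * x i) = ∑ i, μ i * pickArg d μ Dk h i := by
  have hx : ¬ ∃ x ∈ Dk, x ∉ histSpan d h := by
    push_neg; exact hsub
  unfold pickArg
  rw [dif_pos hne, dif_neg hx]
  exact (Finset.exists_mem_eq_sup' hne (fun x => ∑ i, μ i * x i)).choose_spec.2

/-- strong-adversary counter-example.  Given `d ≥ 1`, `K ≥ 2d`,
`μ ∈ ℝ^d` and nonempty finite decision sets `D k` (each possibly a function of
the past action–reward history) whose mean-reward width is at most `1`, there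
are a strong adversary (choosing `σ_k ∈ {0,1}` from `D_k` and the past
interaction) and a learner (choosing `x_k ∈ D_k` from the decision sets,
variances and observed rewards, where `r_j = ⟨μ,x_j⟩` exactly whenever
`σ_j = 0`) such that on every realization: (i) the regret is at most `d`;
(ii) `∑_k σ_k² ≥ K/2`; moreover `σ_k = 0` exactly on the rounds in which `D_k`
contains a vector outside the span of the previously selected actions, and
there are at most `d` such rounds. -/
theorem strong_adversary_breaks_lower_bound
    (d K : ℕ) (hd : 1 ≤ d) (hK : 2 * d ≤ K) (μ : Fin d → ℝ)
    (D : ℕ → List ((Fin d → ℝ) × ℝ) → Finset (Fin d → ℝ))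
    (hDne : ∀ k h, (D k h).Nonempty)
    (hwidth : ∀ k h,
      (D k h).sup' (hDne k h) (fun x => ∑ i, μ i * x i) -
        (D k h).inf' (hDne k h) (fun x => ∑ i, μ i * x i) ≤ 1) :
    ∃ (adv : Finset (Fin d → ℝ) → List ((Fin d → ℝ) × ℝ) → ℝ)
      (lrn : Finset (Fin d → ℝ) → ℝ → List ((Fin d → ℝ) × ℝ) → (Fin d → ℝ)),
      (∀ Dk h, adv Dk h = 0 ∨ adv Dk h = 1) ∧
      (∀ Dk s h, Dk.Nonempty → lrn Dk s h ∈ Dk) ∧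
      (∀ (r : ℕ → ℝ) (hist : ℕ → List ((Fin d → ℝ) × ℝ)),
        hist 0 = [] →
        (∀ k : ℕ,
          hist (k + 1) = hist k ++
            [(lrn (D k (hist k)) (adv (D k (hist k)) (hist k)) (hist k), r k)]) →
        (∀ k : ℕ, k < K → adv (D k (hist k)) (hist k) = 0 →
          r k = ∑ i, μ i *
            lrn (D k (hist k)) (adv (D k (hist k)) (hist k)) (hist k) i) →
        (∑ k : Fin K,
            ((D (k : ℕ) (hist (k : ℕ))).sup' (hDne (k : ℕ) (hist (k : ℕ)))
                (fun x => ∑ i, μ i * x i) -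
              ∑ i, μ i *
                lrn (D (k : ℕ) (hist (k : ℕ)))
                  (adv (D (k : ℕ) (hist (k : ℕ))) (hist (k : ℕ)))
                  (hist (k : ℕ)) i) ≤ (d : ℝ)) ∧
        ((K : ℝ) / 2 ≤
          ∑ k : Fin K, (adv (D (k : ℕ) (hist (k : ℕ))) (hist (k : ℕ))) ^ 2) ∧
        (∀ k : Fin K,
          adv (D (k : ℕ) (hist (k : ℕ))) (hist (k : ℕ)) = 0 ↔
            ¬ (↑(D (k : ℕ) (hist (k : ℕ))) : Set (Fin d → ℝ)) ⊆
              ↑(Submodule.span ℝ {v | ∃ p ∈ hist (k : ℕ), p.1 = v})) ∧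
        ({k : Fin K |
            ¬ (↑(D (k : ℕ) (hist (k : ℕ))) : Set (Fin d → ℝ)) ⊆
              ↑(Submodule.span ℝ {v | ∃ p ∈ hist (k : ℕ), p.1 = v})}.ncard ≤ d)) := by
  classical
  refine ⟨advFn d, fun Dk _ h => pickArg d μ Dk h, ?_, ?_, ?_⟩
  · intro Dk h
    unfold advFn
    split_ifs <;> simp
  · intro Dk s h hne
    exact pickArg_mem d μ Dk h hne
  · intro r hist h0 hstep hr
    set P : ℕ → Prop := fun k =>
      ¬ (↑(D k (hist k)) : Set (Fin d → ℝ)) ⊆ ↑(histSpan d (hist k)) with hPdef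
    set A : ℕ → (Fin d → ℝ) := fun k => pickArg d μ (D k (hist k)) (hist k)
      with hAdef
    -- span monotonicity
    have hmono : ∀ k, histSpan d (hist k) ≤ histSpan d (hist (k + 1)) := by
      intro k
      apply Submodule.span_mono
      rintro v ⟨p, hp, rfl⟩
      exact ⟨p, by rw [hstep k]; exact List.mem_append_left _ hp, rfl⟩
    have hAmem : ∀ k, A k ∈ histSpan d (hist (k + 1)) := by
      intro k
      apply Submodule.subset_span
      refine ⟨(A k, r k), ?_, rfl⟩
      rw [hstep k]
      exact List.mem_append_right _ (List.mem_singleton.mpr rfl)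
    -- when P k holds there is a point of D k outside the span
    have hPx : ∀ k, P k → ∃ x ∈ D k (hist k), x ∉ histSpan d (hist k) := by
      intro k hk
      obtain ⟨x, hx1, hx2⟩ := Set.not_subset.mp hk
      exact ⟨x, hx1, hx2⟩
    have hstrict : ∀ k, P k →
        histSpan d (hist k) < histSpan d (hist (k + 1)) := by
      intro k hk
      refine lt_of_le_of_ne (hmono k) ?_
      intro he
      exact pickArg_notMem d μ (D k (hist k)) (hist k) (hPx k hk)
        (he ▸ hAmem k)
    -- rank counting
    have hrank : ∀ k,
        ((Finset.range k).filter P).card ≤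
          Module.finrank ℝ (histSpan d (hist k)) := by
      intro k
      induction k with
      | zero => simp
      | succ k ih =>
        rw [Finset.range_add_one, Finset.filter_insert]
        by_cases hk : P k
        · rw [if_pos hk]
          have h1 : Module.finrank ℝ (histSpan d (hist k)) <
              Module.finrank ℝ (histSpan d (hist (k + 1))) :=
            Submodule.finrank_lt_finrank_of_lt (hstrict k hk)
          have h2 : k ∉ (Finset.range k).filter P := by simp
          rw [Finset.card_insert_of_notMem h2]
          omega
        · rw [if_neg hk]
          exact le_trans ih (Submodule.finrank_mono (hmono k))
    have hcard : ((Finset.range K).filter P).card ≤ d := by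
      calc ((Finset.range K).filter P).card
          ≤ Module.finrank ℝ (histSpan d (hist K)) := hrank K
        _ ≤ Module.finrank ℝ (Fin d → ℝ) := Submodule.finrank_le _
        _ = d := by simp
    -- per-round behaviour
    have hAmemD : ∀ k, A k ∈ D k (hist k) := fun k =>
      pickArg_mem d μ _ _ (hDne k (hist k))
    have hsupA : ∀ k, ¬ P k →
        (D k (hist k)).sup' (hDne k (hist k)) (fun x => ∑ i, μ i * x i) =
          ∑ i, μ i * A k i := by
      intro k hk
      have hsub : ∀ x ∈ D k (hist k), x ∈ histSpan d (hist k) := by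
        rw [hPdef] at hk
        simp only [not_not] at hk
        intro x hx
        exact hk hx
      exact pickArg_sup d μ _ _ (hDne k (hist k)) hsub
    have hadvP : ∀ k, advFn d (D k (hist k)) (hist k) = if P k then 0 else 1 := by
      intro k
      unfold advFn
      by_cases hk : P k
      · rw [if_pos hk, if_neg hk]
      · rw [if_neg hk, if_pos (not_not.mp hk)]
    refine ⟨?_, ?_, ?_, ?_⟩
    · -- regret bound
      calc (∑ k : Fin K,
            ((D (k : ℕ) (hist (k : ℕ))).sup' (hDne (k : ℕ) (hist (k : ℕ)))
                (fun x => ∑ i, μ i * x i) -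
              ∑ i, μ i * A (k : ℕ) i))
          ≤ ∑ k : Fin K, (if P (k : ℕ) then (1 : ℝ) else 0) := by
            apply Finset.sum_le_sum
            intro k _
            by_cases hk : P (k : ℕ)
            · rw [if_pos hk]
              have h1 := hwidth (k : ℕ) (hist (k : ℕ))
              have h2 : (D (k : ℕ) (hist (k : ℕ))).inf' (hDne (k : ℕ) (hist (k : ℕ)))
                  (fun x => ∑ i, μ i * x i) ≤ ∑ i, μ i * A (k : ℕ) i :=
                Finset.inf'_le _ (hAmemD (k : ℕ))
              linarith
            · rw [if_neg hk, hsupA (k : ℕ) hk]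
              simp
        _ = ((Finset.range K).filter P).card := by
            rw [Fin.sum_univ_eq_sum_range (fun k => if P k then (1 : ℝ) else 0) K,
              Finset.sum_boole]
        _ ≤ (d : ℝ) := by exact_mod_cast hcard
    · -- variance lower bound
      have hsum : (∑ k : Fin K, (advFn d (D (k : ℕ) (hist (k : ℕ))) (hist (k : ℕ))) ^ 2)
          = (K : ℝ) - ((Finset.range K).filter P).card := by
        have : ∀ k : ℕ, (advFn d (D k (hist k)) (hist k)) ^ 2
            = 1 - (if P k then (1 : ℝ) else 0) := by
          intro k
          rw [hadvP k]
          by_cases hk : P k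
          · rw [if_pos hk, if_pos hk]; norm_num
          · rw [if_neg hk, if_neg hk]; norm_num
        calc (∑ k : Fin K, (advFn d (D (k : ℕ) (hist (k : ℕ))) (hist (k : ℕ))) ^ 2)
            = ∑ k : Fin K, (1 - (if P (k : ℕ) then (1 : ℝ) else 0)) := by
              exact Finset.sum_congr rfl fun k _ => this (k : ℕ)
          _ = (K : ℝ) - ∑ k : Fin K, (if P (k : ℕ) then (1 : ℝ) else 0) := by
              rw [Finset.sum_sub_distrib]
              simp
          _ = (K : ℝ) - ((Finset.range K).filter P).card := by
              rw [Fin.sum_univ_eq_sum_range (fun k => if P k then (1 : ℝ) else 0) K,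
                Finset.sum_boole]
      rw [hsum]
      have h1 : ((Finset.range K).filter P).card ≤ d := hcard
      have h2 : (2 * d : ℝ) ≤ (K : ℝ) := by exact_mod_cast hK
      have h3 : (((Finset.range K).filter P).card : ℝ) ≤ (d : ℝ) := by
        exact_mod_cast h1
      linarith
    · -- iff characterization
      intro k
      rw [hadvP (k : ℕ)]
      by_cases hk : P (k : ℕ)
      · rw [if_pos hk]
        exact ⟨fun _ => hk, fun _ => rfl⟩
      · rw [if_neg hk]
        exact ⟨fun h1 => absurd h1 one_ne_zero, fun h1 => absurd h1 hk⟩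
    · -- ncard bound
      have heq : {k : Fin K |
          ¬ (↑(D (k : ℕ) (hist (k : ℕ))) : Set (Fin d → ℝ)) ⊆
            ↑(Submodule.span ℝ {v | ∃ p ∈ hist (k : ℕ), p.1 = v})}.ncard
          = (Finset.univ.filter (fun k : Fin K => P (k : ℕ))).card := by
        rw [Set.ncard_eq_toFinset_card']
        congr 1
        ext k
        simp [hPdef, histSpan]
      rw [heq]
      have : (Finset.univ.filter (fun k : Fin K => P (k : ℕ))).card
          = ((Finset.range K).filter P).card := by
        rw [Finset.card_filter, Finset.card_filter]
        exact Fin.sum_univ_eq_sum_range (fun k => if P k then 1 else 0) K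
      rw [this]
      exact hcard
end

section
/- Let K ≥ 2 and d ≥ 2 be integers, let L = ⌈log₂ K⌉ + 1, suppose L divides d, and set d_i = d/L. Let σ_1,…,σ_K ∈ [0,1] satisfy ∑_{k=1}^K σ_k² ≥ 1 + 384·d². Define K_0 = {k ∈ [K] : σ_k ≤ 1/K}, and for i = 1,…,L−1, K_i = {k ∈ [K] : 2^{i−1}/K < σ_k ≤ 2^i/K} and σ(i) = 2^{i−1}/K. If nonnegative reals R_0, R_1, …, R_{L−1} satisfy R_i ≥ 1{|K_i| ≥ 1.5·d_i²} · d_i·σ(i)·√(|K_i|)/(8·√6) for every i ∈ {1,…,L−1}, then ∑_{i=0}^{L−1} R_i ≥ d·√(∑_{k=1}^K σ_k² − 1)/(32·√6·L). -/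
open Finset

lemma sqrt_sum_le' {ι : Type*} (s : Finset ι) (f : ι → ℝ) (hf : ∀ i ∈ s, 0 ≤ f i) :
    Real.sqrt (∑ i ∈ s, f i) ≤ ∑ i ∈ s, Real.sqrt (f i) := by
  classical
  induction s using Finset.induction_on with
  | empty => simp
  | insert _ _ hx ih =>
    rename_i a t
    rw [Finset.sum_insert hx, Finset.sum_insert hx]
    have h1 : 0 ≤ f a := hf a (mem_insert_self _ _)
    have h2 : 0 ≤ ∑ i ∈ t, f i := Finset.sum_nonneg fun i hi => hf i (mem_insert_of_mem hi)
    have key : Real.sqrt (f a + ∑ i ∈ t, f i) ≤ Real.sqrt (f a) + Real.sqrt (∑ i ∈ t, f i) := by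
      nlinarith [Real.sq_sqrt h1, Real.sq_sqrt h2, Real.sqrt_nonneg (f a),
        Real.sqrt_nonneg (∑ i ∈ t, f i),
        Real.sq_sqrt (by linarith : (0:ℝ) ≤ f a + ∑ i ∈ t, f i),
        Real.sqrt_nonneg (f a + ∑ i ∈ t, f i),
        mul_nonneg (Real.sqrt_nonneg (f a)) (Real.sqrt_nonneg (∑ i ∈ t, f i))]
    exact key.trans (by gcongr; exact ih fun i hi => hf i (mem_insert_of_mem hi))

set_option maxHeartbeats 1000000 in
/-- the arithmetic core of the peeling argument.  With
`L = ⌈log₂ K⌉ + 1`, `d_i = d/L`, groups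
`K_i = {k : 2^{i−1}/K < σ_k ≤ 2^i/K}` and thresholds `σ(i) = 2^{i−1}/K`, if
nonnegative reals `R_0, …, R_{L−1}` satisfy
`R_i ≥ 1{|K_i| ≥ 1.5·d_i²} · d_i·σ(i)·√|K_i|/(8√6)` for `i = 1, …, L−1`,
then `∑_{i=0}^{L−1} R_i ≥ d·√(∑_k σ_k² − 1)/(32·√6·L)`. -/
theorem peeling_arithmetic_core (K d : ℕ) (hK : 2 ≤ K) (hd : 2 ≤ d)
    (hdvd : (Nat.clog 2 K + 1) ∣ d)
    (σs : Fin K → ℝ) (hσ : ∀ k, 0 ≤ σs k ∧ σs k ≤ 1)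
    (hsum : 1 + 384 * (d : ℝ) ^ 2 ≤ ∑ k, σs k ^ 2)
    (R : ℕ → ℝ) (hR : ∀ i, 0 ≤ R i)
    (hRlb : ∀ i, 1 ≤ i → i ≤ Nat.clog 2 K →
      (if (3 : ℝ) / 2 * ((d / (Nat.clog 2 K + 1) : ℕ) : ℝ) ^ 2 ≤
          (((Finset.univ.filter (fun k : Fin K =>
              (2 : ℝ) ^ (i - 1) / (K : ℝ) < σs k ∧
                σs k ≤ (2 : ℝ) ^ i / (K : ℝ))).card : ℕ) : ℝ)
       then
         ((d / (Nat.clog 2 K + 1) : ℕ) : ℝ) * ((2 : ℝ) ^ (i - 1) / (K : ℝ)) *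
           Real.sqrt (((Finset.univ.filter (fun k : Fin K =>
              (2 : ℝ) ^ (i - 1) / (K : ℝ) < σs k ∧
                σs k ≤ (2 : ℝ) ^ i / (K : ℝ))).card : ℕ) : ℝ) / (8 * Real.sqrt 6)
       else 0) ≤ R i) :
    (d : ℝ) * Real.sqrt ((∑ k, σs k ^ 2) - 1) /
        (32 * Real.sqrt 6 * ((Nat.clog 2 K : ℕ) + 1 : ℝ)) ≤
      ∑ i ∈ Finset.range (Nat.clog 2 K + 1), R i := by
  classical
  set L := Nat.clog 2 K + 1 with hLdef
  have hclog : 1 ≤ Nat.clog 2 K := Nat.clog_pos one_lt_two hK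
  have hL2 : 2 ≤ L := by omega
  have hKpos : (0:ℝ) < K := by exact_mod_cast (by omega : 0 < K)
  have hK1 : (1:ℝ) ≤ K := by exact_mod_cast (by omega : 1 ≤ K)
  set n := d / L with hndef
  have hnL : n * L = d := Nat.div_mul_cancel hdvd
  have hn1 : 1 ≤ n :=
    (Nat.one_le_div_iff (by omega)).mpr (Nat.le_of_dvd (by omega) hdvd)
  set A : ℕ → Finset (Fin K) := fun i => univ.filter fun k =>
      (2:ℝ)^(i-1)/(K:ℝ) < σs k ∧ σs k ≤ (2:ℝ)^i/(K:ℝ) with hAdef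
  set S := ∑ k, σs k ^ 2 with hSdef
  have hRlb' : ∀ i, 1 ≤ i → i ≤ Nat.clog 2 K →
      (if (3:ℝ)/2 * (n:ℝ)^2 ≤ ((A i).card : ℝ) then
        (n:ℝ) * ((2:ℝ)^(i-1)/(K:ℝ)) * Real.sqrt ((A i).card) / (8 * Real.sqrt 6)
       else 0) ≤ R i := hRlb
  have hS1 : (0:ℝ) ≤ S - 1 := by nlinarith [sq_nonneg (d:ℝ)]
  -- threshold bounds
  have hs_nonneg : ∀ i : ℕ, (0:ℝ) ≤ (2:ℝ)^(i-1)/(K:ℝ) := fun i => by positivity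
  have hs_le_one : ∀ i : ℕ, 1 ≤ i → i ≤ Nat.clog 2 K → (2:ℝ)^(i-1)/(K:ℝ) ≤ 1 := by
    intro i h1 h2
    have hlt : (2:ℕ)^(Nat.clog 2 K - 1) < K := Nat.pow_pred_clog_lt_self one_lt_two (by omega)
    have hle : (2:ℕ)^(i-1) ≤ (2:ℕ)^(Nat.clog 2 K - 1) := Nat.pow_le_pow_right (by omega) (by omega)
    have : (2:ℝ)^(i-1) ≤ (K:ℝ) := by
      have : (2:ℕ)^(i-1) ≤ K := by omega
      exact_mod_cast (by push_cast; exact_mod_cast this : ((2:ℕ)^(i-1) : ℝ) ≤ (K:ℝ))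
    rw [div_le_one hKpos]; exact this
  -- partition property
  have hpart : ∀ k : Fin K, 1/(K:ℝ) < σs k →
      ∃ i, 1 ≤ i ∧ i ≤ Nat.clog 2 K ∧ k ∈ A i := by
    intro k hk
    have hex : ∃ i, σs k ≤ (2:ℝ)^i/(K:ℝ) := by
      refine ⟨Nat.clog 2 K, ?_⟩
      have h1 : (K:ℝ) ≤ (2:ℝ)^(Nat.clog 2 K) := by
        exact_mod_cast (Nat.le_pow_clog one_lt_two K)
      rw [le_div_iff₀ hKpos]
      nlinarith [(hσ k).2]
    have hPi : σs k ≤ (2:ℝ)^(Nat.find hex)/(K:ℝ) := Nat.find_spec hex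
    have hile : Nat.find hex ≤ Nat.clog 2 K := Nat.find_min' hex (by
      have h1 : (K:ℝ) ≤ (2:ℝ)^(Nat.clog 2 K) := by
        exact_mod_cast (Nat.le_pow_clog one_lt_two K)
      rw [le_div_iff₀ hKpos]
      nlinarith [(hσ k).2])
    have hi1 : 1 ≤ Nat.find hex := by
      rcases Nat.eq_zero_or_pos (Nat.find hex) with h0 | h
      · rw [h0, pow_zero] at hPi; linarith
      · exact h
    have hlt : (2:ℝ)^(Nat.find hex - 1)/(K:ℝ) < σs k := by
      have := Nat.find_min hex (show Nat.find hex - 1 < Nat.find hex by omega)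
      push_neg at this
      exact this
    exact ⟨Nat.find hex, hi1, hile, by
      simp only [hAdef, Finset.mem_filter, Finset.mem_univ, true_and]
      exact ⟨hlt, hPi⟩⟩
  -- step 2 : S - 1 ≤ T
  have hT : S - 1 ≤ ∑ i ∈ Finset.Ico 1 L, ∑ k ∈ A i, σs k ^ 2 := by
    have key : ∀ k : Fin K, σs k ^ 2 ≤ 1/(K:ℝ)^2 +
        ∑ i ∈ Finset.Ico 1 L, (if k ∈ A i then σs k ^ 2 else 0) := by
      intro k
      by_cases hk : 1/(K:ℝ) < σs k
      · obtain ⟨i, hi1, hi2, hmem⟩ := hpart k hk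
        have him : i ∈ Finset.Ico 1 L := Finset.mem_Ico.mpr ⟨hi1, by rw [hLdef]; omega⟩
        have h1 : σs k ^ 2 ≤ ∑ i ∈ Finset.Ico 1 L, (if k ∈ A i then σs k ^ 2 else 0) := by
          have := Finset.single_le_sum (f := fun i => if k ∈ A i then σs k ^ 2 else 0)
            (fun j _ => by positivity) him
          simpa [hmem] using this
        have : (0:ℝ) ≤ 1/(K:ℝ)^2 := by positivity
        linarith
      · push_neg at hk
        have h0 := (hσ k).1
        have h1 : σs k ^ 2 ≤ 1/(K:ℝ)^2 := by
          have := pow_le_pow_left₀ h0 hk 2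
          rwa [div_pow, one_pow] at this
        have h2 : (0:ℝ) ≤ ∑ i ∈ Finset.Ico 1 L, (if k ∈ A i then σs k ^ 2 else 0) :=
          Finset.sum_nonneg fun j _ => by positivity
        linarith
    have hsum2 : S ≤ ∑ k : Fin K, (1/(K:ℝ)^2 +
        ∑ i ∈ Finset.Ico 1 L, (if k ∈ A i then σs k ^ 2 else 0)) :=
      Finset.sum_le_sum fun k _ => key k
    rw [Finset.sum_add_distrib, Finset.sum_comm] at hsum2
    have hconst : ∑ _k : Fin K, 1/(K:ℝ)^2 = 1/(K:ℝ) := by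
      rw [Finset.sum_const, Finset.card_univ, Fintype.card_fin, nsmul_eq_mul]
      field_simp
    have hinner : ∀ i, ∑ k : Fin K, (if k ∈ A i then σs k ^ 2 else 0) = ∑ k ∈ A i, σs k ^ 2 := by
      intro i
      rw [Finset.sum_ite_mem, Finset.univ_inter]
    simp only [hinner, hconst] at hsum2
    have : 1/(K:ℝ) ≤ 1 := by rw [div_le_one hKpos]; exact hK1
    linarith
  -- step 3 : group sums bounded by 4 σ(i)² |K_i|
  have hgrp : ∀ i ∈ Finset.Ico 1 L, ∑ k ∈ A i, σs k ^ 2 ≤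
      4 * ((2:ℝ)^(i-1)/(K:ℝ))^2 * ((A i).card : ℝ) := by
    intro i hi
    obtain ⟨hi1, _⟩ := Finset.mem_Ico.mp hi
    have hpow : (2:ℝ)^i = 2 * (2:ℝ)^(i-1) := by
      conv_lhs => rw [show i = (i-1)+1 by omega]
      rw [pow_succ]; ring
    have hb : ∀ k ∈ A i, σs k ^ 2 ≤ 4 * ((2:ℝ)^(i-1)/(K:ℝ))^2 := by
      intro k hk
      simp only [hAdef, Finset.mem_filter] at hk
      have h1 := hk.2.2
      have h0 := (hσ k).1
      rw [hpow] at h1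
      have : σs k ≤ 2 * ((2:ℝ)^(i-1)/(K:ℝ)) := by
        rw [mul_div_assoc] at h1
        exact h1
      nlinarith [hs_nonneg i]
    calc ∑ k ∈ A i, σs k ^ 2 ≤ ∑ _k ∈ A i, 4 * ((2:ℝ)^(i-1)/(K:ℝ))^2 :=
          Finset.sum_le_sum hb
      _ = 4 * ((2:ℝ)^(i-1)/(K:ℝ))^2 * ((A i).card : ℝ) := by
          rw [Finset.sum_const, nsmul_eq_mul]; ring
  have hT2 : S - 1 ≤ ∑ i ∈ Finset.Ico 1 L, 4 * ((2:ℝ)^(i-1)/(K:ℝ))^2 * ((A i).card : ℝ) :=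
    hT.trans (Finset.sum_le_sum hgrp)
  -- step 4 : split into big / small groups
  set big := (Finset.Ico 1 L).filter (fun i => (3:ℝ)/2 * (n:ℝ)^2 ≤ ((A i).card : ℝ)) with hbigdef
  have hsplit : ∑ i ∈ Finset.Ico 1 L, 4 * ((2:ℝ)^(i-1)/(K:ℝ))^2 * ((A i).card : ℝ) =
      (∑ i ∈ big, 4 * ((2:ℝ)^(i-1)/(K:ℝ))^2 * ((A i).card : ℝ)) +
      ∑ i ∈ (Finset.Ico 1 L).filter (fun i => ¬ ((3:ℝ)/2 * (n:ℝ)^2 ≤ ((A i).card : ℝ))),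
        4 * ((2:ℝ)^(i-1)/(K:ℝ))^2 * ((A i).card : ℝ) :=
    (Finset.sum_filter_add_sum_filter_not _ _ _).symm
  have hsmall : ∑ i ∈ (Finset.Ico 1 L).filter (fun i => ¬ ((3:ℝ)/2 * (n:ℝ)^2 ≤ ((A i).card : ℝ))),
      4 * ((2:ℝ)^(i-1)/(K:ℝ))^2 * ((A i).card : ℝ) ≤ 6 * (d:ℝ)^2 := by
    have hterm : ∀ i ∈ (Finset.Ico 1 L).filter
        (fun i => ¬ ((3:ℝ)/2 * (n:ℝ)^2 ≤ ((A i).card : ℝ))),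
        4 * ((2:ℝ)^(i-1)/(K:ℝ))^2 * ((A i).card : ℝ) ≤ 6 * (n:ℝ)^2 := by
      intro i hi
      rw [Finset.mem_filter, Finset.mem_Ico] at hi
      obtain ⟨⟨hi1, hi2⟩, hcard⟩ := hi
      push_neg at hcard
      have hs1 : (2:ℝ)^(i-1)/(K:ℝ) ≤ 1 := hs_le_one i hi1 (by omega)
      have hs0 := hs_nonneg i
      have hc0 : (0:ℝ) ≤ ((A i).card : ℝ) := Nat.cast_nonneg _
      have hs2 : ((2:ℝ)^(i-1)/(K:ℝ))^2 ≤ 1 := by nlinarith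
      nlinarith [mul_le_mul_of_nonneg_right hs2 hc0]
    calc _ ≤ ∑ _i ∈ (Finset.Ico 1 L).filter
          (fun i => ¬ ((3:ℝ)/2 * (n:ℝ)^2 ≤ ((A i).card : ℝ))), 6 * (n:ℝ)^2 :=
          Finset.sum_le_sum hterm
      _ ≤ (L:ℝ) * (6 * (n:ℝ)^2) := by
          rw [Finset.sum_const, nsmul_eq_mul]
          have : ((Finset.Ico 1 L).filter
              (fun i => ¬ ((3:ℝ)/2 * (n:ℝ)^2 ≤ ((A i).card : ℝ)))).card ≤ L := by
            calc _ ≤ (Finset.Ico 1 L).card := Finset.card_filter_le _ _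
              _ ≤ L := by rw [Nat.card_Ico]; omega
          have hn0 : (0:ℝ) ≤ 6 * (n:ℝ)^2 := by positivity
          have : (((Finset.Ico 1 L).filter
              (fun i => ¬ ((3:ℝ)/2 * (n:ℝ)^2 ≤ ((A i).card : ℝ)))).card : ℝ) ≤ (L:ℝ) := by
            exact_mod_cast this
          nlinarith
      _ ≤ 6 * (d:ℝ)^2 := by
          have hdcast : (n:ℝ) * (L:ℝ) = (d:ℝ) := by exact_mod_cast hnL
          have hnd : (n:ℝ) ≤ (d:ℝ) := by
            have : n ≤ d := by
              calc n ≤ n * L := Nat.le_mul_of_pos_right n (by omega)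
                _ = d := hnL
            exact_mod_cast this
          have hn0 : (0:ℝ) ≤ (n:ℝ) := Nat.cast_nonneg _
          nlinarith
  have hbig : (S - 1) / 2 ≤ ∑ i ∈ big, 4 * ((2:ℝ)^(i-1)/(K:ℝ))^2 * ((A i).card : ℝ) := by
    have h6d : 6 * (d:ℝ)^2 ≤ (S - 1) / 2 := by nlinarith [sq_nonneg (d:ℝ)]
    rw [hsplit] at hT2
    linarith
  -- step 5 : sum of σ(i)√|K_i| over big groups dominates √((S-1)/8)
  have hsqrt1 : Real.sqrt ((S - 1) / 8) ≤
      ∑ i ∈ big, ((2:ℝ)^(i-1)/(K:ℝ)) * Real.sqrt ((A i).card : ℝ) := by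
    have hB : (S - 1) / 8 ≤ ∑ i ∈ big, ((2:ℝ)^(i-1)/(K:ℝ))^2 * ((A i).card : ℝ) := by
      have : ∑ i ∈ big, 4 * ((2:ℝ)^(i-1)/(K:ℝ))^2 * ((A i).card : ℝ) =
          4 * ∑ i ∈ big, ((2:ℝ)^(i-1)/(K:ℝ))^2 * ((A i).card : ℝ) := by
        rw [Finset.mul_sum]; exact Finset.sum_congr rfl fun i _ => by ring
      rw [this] at hbig
      linarith
    calc Real.sqrt ((S - 1) / 8) ≤
          Real.sqrt (∑ i ∈ big, ((2:ℝ)^(i-1)/(K:ℝ))^2 * ((A i).card : ℝ)) :=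
            Real.sqrt_le_sqrt hB
      _ ≤ ∑ i ∈ big, Real.sqrt (((2:ℝ)^(i-1)/(K:ℝ))^2 * ((A i).card : ℝ)) :=
            sqrt_sum_le' _ _ (fun i _ => by positivity)
      _ = ∑ i ∈ big, ((2:ℝ)^(i-1)/(K:ℝ)) * Real.sqrt ((A i).card : ℝ) := by
            refine Finset.sum_congr rfl fun i _ => ?_
            rw [Real.sqrt_mul (sq_nonneg _), Real.sqrt_sq (hs_nonneg i)]
  -- step 6 : lower bound the sum of R over big groups
  have hRbig : (n:ℝ) / (8 * Real.sqrt 6) * Real.sqrt ((S - 1) / 8) ≤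
      ∑ i ∈ Finset.range L, R i := by
    have hsub : big ⊆ Finset.range L := by
      intro i hi
      rw [hbigdef, Finset.mem_filter, Finset.mem_Ico] at hi
      exact Finset.mem_range.mpr hi.1.2
    have h1 : ∑ i ∈ big, R i ≤ ∑ i ∈ Finset.range L, R i :=
      Finset.sum_le_sum_of_subset_of_nonneg hsub (fun i _ _ => hR i)
    have h2 : ∑ i ∈ big, (n:ℝ) * ((2:ℝ)^(i-1)/(K:ℝ)) * Real.sqrt ((A i).card : ℝ) /
        (8 * Real.sqrt 6) ≤ ∑ i ∈ big, R i := by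
      refine Finset.sum_le_sum fun i hi => ?_
      rw [hbigdef, Finset.mem_filter, Finset.mem_Ico] at hi
      have := hRlb' i hi.1.1 (by omega)
      rwa [if_pos hi.2] at this
    have h3 : ∑ i ∈ big, (n:ℝ) * ((2:ℝ)^(i-1)/(K:ℝ)) * Real.sqrt ((A i).card : ℝ) /
        (8 * Real.sqrt 6) = (n:ℝ) / (8 * Real.sqrt 6) *
          ∑ i ∈ big, ((2:ℝ)^(i-1)/(K:ℝ)) * Real.sqrt ((A i).card : ℝ) := by
      rw [Finset.mul_sum]
      exact Finset.sum_congr rfl fun i _ => by ring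
    have hcoef : (0:ℝ) ≤ (n:ℝ) / (8 * Real.sqrt 6) := by positivity
    calc (n:ℝ) / (8 * Real.sqrt 6) * Real.sqrt ((S - 1) / 8)
        ≤ (n:ℝ) / (8 * Real.sqrt 6) *
          ∑ i ∈ big, ((2:ℝ)^(i-1)/(K:ℝ)) * Real.sqrt ((A i).card : ℝ) :=
          mul_le_mul_of_nonneg_left hsqrt1 hcoef
      _ = ∑ i ∈ big, (n:ℝ) * ((2:ℝ)^(i-1)/(K:ℝ)) * Real.sqrt ((A i).card : ℝ) /
          (8 * Real.sqrt 6) := h3.symm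
      _ ≤ ∑ i ∈ big, R i := h2
      _ ≤ ∑ i ∈ Finset.range L, R i := h1
  -- step 7 : final numeric comparison
  have h6pos : (0:ℝ) < Real.sqrt 6 := Real.sqrt_pos.mpr (by norm_num)
  have h8pos : (0:ℝ) < Real.sqrt 8 := Real.sqrt_pos.mpr (by norm_num)
  have h8le : Real.sqrt 8 ≤ 4 := by
    nlinarith [Real.sq_sqrt (show (0:ℝ) ≤ 8 by norm_num), Real.sqrt_nonneg 8]
  have hsq0 : (0:ℝ) ≤ Real.sqrt (S - 1) := Real.sqrt_nonneg _
  have hdiv : Real.sqrt ((S - 1) / 8) = Real.sqrt (S - 1) / Real.sqrt 8 := by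
    rw [Real.sqrt_div hS1]
  have hdcast : (n:ℝ) * ((Nat.clog 2 K : ℝ) + 1) = (d:ℝ) := by
    have : (n:ℝ) * (L:ℝ) = (d:ℝ) := by exact_mod_cast hnL
    rw [← this, hLdef]
    push_cast
    ring
  have hLpos : (0:ℝ) < (Nat.clog 2 K : ℝ) + 1 := by positivity
  calc (d:ℝ) * Real.sqrt (S - 1) / (32 * Real.sqrt 6 * ((Nat.clog 2 K : ℝ) + 1))
      = (n:ℝ) * Real.sqrt (S - 1) / (32 * Real.sqrt 6) := by
        rw [← hdcast]
        field_simp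
    _ ≤ (n:ℝ) / (8 * Real.sqrt 6) * Real.sqrt ((S - 1) / 8) := by
        rw [hdiv, div_mul_div_comm, div_le_div_iff₀ (by positivity) (by positivity)]
        have hn0 : (0:ℝ) ≤ (n:ℝ) := Nat.cast_nonneg _
        nlinarith [mul_le_mul_of_nonneg_left h8le
          (mul_nonneg (mul_nonneg hn0 hsq0) h6pos.le)]
    _ ≤ ∑ i ∈ Finset.range L, R i := hRbig
end
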